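/- (Orbifold torus structure of the Cayley cubic.) Define Φ : (ℂ \ {0}) × (ℂ \ {0}) → ℂ³ by Φ(u,v) = (u + u⁻¹, v + v⁻¹, −(uv + (uv)⁻¹)). Then: (i) Φ(u,v) ∈ S(0,0,0,−4) for all u,v ∈ ℂ \ {0}; (ii) Φ is surjective onto S(0,0,0,−4); (iii) for u,v,u′,v′ ∈ ℂ \ {0}, Φ(u,v) = Φ(u′,v′) if and only if (u′,v′) = (u,v) or (u′,v′) = (u⁻¹,v⁻¹). Consequently, Φ induces a bijection between the quotient of (ℂ \ {0})² by the involution (u,v) ↦ (u⁻¹,v⁻¹) and the Cayley cubic S(0,0,0,−4). -/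

import Mathlib

noncomputable section

/-- The defining cubic polynomial `f(x,θ)` of the character variety. -/
def pvF (θ : ℂ × ℂ × ℂ × ℂ) (x : ℂ × ℂ × ℂ) : ℂ :=
  x.1 * x.2.1 * x.2.2 + x.1 ^ 2 + x.2.1 ^ 2 + x.2.2 ^ 2
    - θ.1 * x.1 - θ.2.1 * x.2.1 - θ.2.2.1 * x.2.2 + θ.2.2.2

/-- The affine cubic surface `S(θ)`; for `θ = (0,0,0,−4)` it is the Cayley cubic. -/
def pvS (θ : ℂ × ℂ × ℂ × ℂ) : Set (ℂ × ℂ × ℂ) := {x | pvF θ x = 0}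

/-- The orbifold-torus parametrization of the Cayley cubic:
`Φ(u,v) = (u + u⁻¹, v + v⁻¹, −(uv + (uv)⁻¹))`. -/
def Phi (u v : ℂ) : ℂ × ℂ × ℂ :=
  (u + u⁻¹, v + v⁻¹, -(u * v + (u * v)⁻¹))

/-- If `u' + u'⁻¹ = u + u⁻¹` with both nonzero, then `u' = u` or `u' = u⁻¹`. -/
lemma cayley_aux_inv_cases {u u' : ℂ} (hu : u ≠ 0) (hu' : u' ≠ 0)
    (h : u' + u'⁻¹ = u + u⁻¹) : u' = u ∨ u' = u⁻¹ := by
  have h2 : (u' - u) * (u' - u⁻¹) = u' * ((u' + u'⁻¹) - (u + u⁻¹)) := by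
    field_simp
    ring
  rw [h, sub_self, mul_zero] at h2
  rcases mul_eq_zero.mp h2 with h3 | h3
  · left; exact sub_eq_zero.mp h3
  · right; exact sub_eq_zero.mp h3

/-- For any `a : ℂ` there is a nonzero `u` with `u + u⁻¹ = a`. -/
lemma cayley_aux_exists {a : ℂ} : ∃ u : ℂ, u ≠ 0 ∧ u + u⁻¹ = a := by
  obtain ⟨s, hs⟩ : ∃ s : ℂ, s ^ 2 = a ^ 2 - 4 :=
    IsAlgClosed.exists_pow_nat_eq (a ^ 2 - 4) (n := 2) (by norm_num)
  set u : ℂ := (a + s) / 2 with hudef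
  have hmul : u * ((a - s) / 2) = 1 := by
    have : (a + s) * (a - s) = 4 := by linear_combination -hs
    field_simp [hudef]
    linear_combination (-1/2 : ℂ) * hs
  have hu : u ≠ 0 := left_ne_zero_of_mul_eq_one hmul
  refine ⟨u, hu, ?_⟩
  have hinv : u⁻¹ = (a - s) / 2 := inv_eq_of_mul_eq_one_right hmul
  rw [hinv, hudef]
  ring

theorem cayley_orbifold_torus :
    (∀ u v : ℂ, u ≠ 0 → v ≠ 0 →
        Phi u v ∈ pvS ((0 : ℂ), (0 : ℂ), (0 : ℂ), (-4 : ℂ))) ∧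
    (∀ x ∈ pvS ((0 : ℂ), (0 : ℂ), (0 : ℂ), (-4 : ℂ)),
        ∃ u v : ℂ, u ≠ 0 ∧ v ≠ 0 ∧ Phi u v = x) ∧
    (∀ u v u' v' : ℂ, u ≠ 0 → v ≠ 0 → u' ≠ 0 → v' ≠ 0 →
        (Phi u v = Phi u' v' ↔ (u' = u ∧ v' = v) ∨ (u' = u⁻¹ ∧ v' = v⁻¹))) := by
  refine ⟨?_, ?_, ?_⟩
  · -- (i) membership
    intro u v hu hv
    have hu1 : u * u⁻¹ = 1 := mul_inv_cancel₀ hu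
    have hv1 : v * v⁻¹ = 1 := mul_inv_cancel₀ hv
    simp only [pvS, pvF, Phi, Set.mem_setOf_eq]
    rw [mul_inv]
    linear_combination (2 - v ^ 2 - v⁻¹ ^ 2) * hu1 + (2 - u ^ 2 - u⁻¹ ^ 2) * hv1
  · -- (ii) surjectivity
    rintro ⟨a, b, c⟩ hx
    simp only [pvS, pvF, Set.mem_setOf_eq] at hx
    obtain ⟨u, hu, hua⟩ := cayley_aux_exists (a := a)
    obtain ⟨v, hv, hvb⟩ := cayley_aux_exists (a := b)
    have hfac : (c + (u * v + (u * v)⁻¹)) * (c + (u * v⁻¹ + (u * v⁻¹)⁻¹))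
        = a * b * c + a ^ 2 + b ^ 2 + c ^ 2 - 4 := by
      rw [← hua, ← hvb]
      field_simp
      ring
    have hzero : (c + (u * v + (u * v)⁻¹)) * (c + (u * v⁻¹ + (u * v⁻¹)⁻¹)) = 0 := by
      rw [hfac]; linear_combination hx
    rcases mul_eq_zero.mp hzero with h | h
    · exact ⟨u, v, hu, hv, by
        simp only [Phi, Prod.mk.injEq]
        exact ⟨hua, hvb, by linear_combination -h⟩⟩
    · exact ⟨u, v⁻¹, hu, inv_ne_zero hv, by
        simp only [Phi, Prod.mk.injEq, inv_inv]
        exact ⟨hua, by rw [add_comm]; exact hvb, by linear_combination -h⟩⟩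
  · -- (iii) fibers
    intro u v u' v' hu hv hu' hv'
    constructor
    · intro h
      simp only [Phi, Prod.mk.injEq] at h
      obtain ⟨h1, h2, h3⟩ := h
      have huv : u ≠ 0 ∧ v ≠ 0 := ⟨hu, hv⟩
      have hc1 := cayley_aux_inv_cases hu hu' h1.symm
      have hc2 := cayley_aux_inv_cases hv hv' h2.symm
      have h3' : u' * v' + (u' * v')⁻¹ = u * v + (u * v)⁻¹ := by
        linear_combination h3
      have hc3 := cayley_aux_inv_cases (mul_ne_zero hu hv) (mul_ne_zero hu' hv') h3'
      rcases hc1 with h1' | h1' <;> rcases hc2 with h2' | h2'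
      · exact Or.inl ⟨h1', h2'⟩
      · -- u' = u, v' = v⁻¹
        subst h1'; subst h2'
        rcases hc3 with h3'' | h3''
        · -- u * v⁻¹ = u * v ⇒ v⁻¹ = v
          left
          exact ⟨rfl, mul_left_cancel₀ hu h3''⟩
        · -- u * v⁻¹ = (u*v)⁻¹ = u⁻¹ * v⁻¹ ⇒ u = u⁻¹
          right
          rw [mul_inv] at h3''
          exact ⟨mul_right_cancel₀ (inv_ne_zero hv) h3'', rfl⟩
      · -- u' = u⁻¹, v' = v
        subst h1'; subst h2'
        rcases hc3 with h3'' | h3''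
        · -- u⁻¹ * v = u * v ⇒ u⁻¹ = u
          left
          exact ⟨mul_right_cancel₀ hv h3'', rfl⟩
        · right
          rw [mul_inv] at h3''
          exact ⟨rfl, mul_left_cancel₀ (inv_ne_zero hu) h3''⟩
      · exact Or.inr ⟨h1', h2'⟩
    · rintro (⟨rfl, rfl⟩ | ⟨rfl, rfl⟩)
      · rfl
      · simp only [Phi, Prod.mk.injEq, inv_inv, mul_inv]
        exact ⟨add_comm _ _, add_comm _ _, by ring⟩
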